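/- arXiv:math/0410279 — 5 statements merged into one kernel-verified Lean document; each statement's English description precedes it below -/
import Mathlib

section
/- Let c be a classical solution of the convection–dispersion equation on [0, ℓ], and suppose c satisfies a third-type (Robin) entrance condition v·c_in(t) = v·c(t,0) − D·∂x c(t,0) and a third-type exit condition v·c_eff(t) = v·c(t,ℓ) − D·∂x c(t,ℓ) for all t, where c_in, c_eff : ℝ → ℝ are the influent and effluent concentrations. Then the overall conservation law holds: for every t, d/dt ∫₀^ℓ c(t,x) dx = v·c_in(t) − v·c_eff(t) + ∫₀^ℓ r(t,x) dx. In particular, third-type boundaries are a sufficient condition for overall mass conservation, independently of the fate term r. -/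
open Set

/-- `c` is a classical solution of the convection–dispersion equation
`∂t c = D·∂xx c − v·∂x c + r` on the column `[0, ℓ]`, where `ct`, `cx`, `cxx`
denote the partial derivatives `∂t c`, `∂x c`, `∂xx c` (one-sided in the
space variable at the endpoints), and these together with `r` are continuous
on `ℝ × [0, ℓ]`. -/
structure IsCDESolution (D v ℓ : ℝ) (c ct cx cxx r : ℝ → ℝ → ℝ) : Prop where
  hasDeriv_x : ∀ t : ℝ, ∀ x ∈ Icc (0:ℝ) ℓ, HasDerivWithinAt (c t) (cx t x) (Icc 0 ℓ) x
  hasDeriv_xx : ∀ t : ℝ, ∀ x ∈ Icc (0:ℝ) ℓ, HasDerivWithinAt (cx t) (cxx t x) (Icc 0 ℓ) x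
  hasDeriv_t : ∀ x ∈ Icc (0:ℝ) ℓ, ∀ t : ℝ, HasDerivAt (fun s => c s x) (ct t x) t
  cont_ct : ContinuousOn (Function.uncurry ct) (univ ×ˢ Icc 0 ℓ)
  cont_cx : ContinuousOn (Function.uncurry cx) (univ ×ˢ Icc 0 ℓ)
  cont_cxx : ContinuousOn (Function.uncurry cxx) (univ ×ˢ Icc 0 ℓ)
  cont_r : ContinuousOn (Function.uncurry r) (univ ×ˢ Icc 0 ℓ)
  pde : ∀ t : ℝ, ∀ x ∈ Icc (0:ℝ) ℓ, ct t x = D * cxx t x - v * cx t x + r t x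

/-- Third-type (Robin) boundaries at both the entrance and the exit are a
sufficient condition for the overall conservation law
`d/dt ∫₀^ℓ c(t,x) dx = v·c_in(t) − v·c_eff(t) + ∫₀^ℓ r(t,x) dx`,
independently of the fate term `r`. -/
theorem cde_third_type_boundaries_imply_mass_conservation
    (D v ℓ : ℝ) (hD : 0 < D) (hv : 0 < v) (hℓ : 0 < ℓ)
    (c ct cx cxx r : ℝ → ℝ → ℝ) (cin ceff : ℝ → ℝ)
    (hsol : IsCDESolution D v ℓ c ct cx cxx r)
    (hin : ∀ t : ℝ, v * cin t = v * c t 0 - D * cx t 0)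
    (hout : ∀ t : ℝ, v * ceff t = v * c t ℓ - D * cx t ℓ) :
    ∀ t : ℝ,
      HasDerivAt (fun s : ℝ => ∫ x in (0:ℝ)..ℓ, c s x)
        (v * cin t - v * ceff t + ∫ x in (0:ℝ)..ℓ, r t x) t := by
  intro t
  have hℓ0 : (0:ℝ) ≤ ℓ := hℓ.le
  have hmemI : ∀ s : ℝ, ∀ x ∈ Icc (0:ℝ) ℓ, ((s, x) : ℝ × ℝ) ∈ (univ ×ˢ Icc (0:ℝ) ℓ) := by
    intro s x hx; exact ⟨mem_univ _, hx⟩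
  -- continuity of the slices
  have contSlice : ∀ (f : ℝ → ℝ → ℝ), ContinuousOn (Function.uncurry f) (univ ×ˢ Icc (0:ℝ) ℓ) →
      ∀ s : ℝ, ContinuousOn (f s) (Icc (0:ℝ) ℓ) := by
    intro f hf s
    have : ContinuousOn (fun x : ℝ => Function.uncurry f (s, x)) (Icc (0:ℝ) ℓ) :=
      hf.comp (Continuous.continuousOn (by continuity)) (fun x hx => hmemI s x hx)
    simpa [Function.uncurry] using this
  have hct_cont := contSlice ct hsol.cont_ct
  have hcx_cont := contSlice cx hsol.cont_cx
  have hcxx_cont := contSlice cxx hsol.cont_cxx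
  have hr_cont := contSlice r hsol.cont_r
  have hc_cont : ∀ s : ℝ, ContinuousOn (c s) (Icc (0:ℝ) ℓ) := fun s x hx =>
    (hsol.hasDeriv_x s x hx).continuousWithinAt
  -- bound for ct on a compact neighborhood
  obtain ⟨M, hM⟩ : ∃ M, ∀ p ∈ (Icc (t-1) (t+1)) ×ˢ (Icc (0:ℝ) ℓ), ‖Function.uncurry ct p‖ ≤ M := by
    apply (isCompact_Icc.prod isCompact_Icc).exists_bound_of_continuousOn
    exact hsol.cont_ct.mono (prod_mono_left (subset_univ _))
  have key := intervalIntegral.hasDerivAt_integral_of_dominated_loc_of_deriv_le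
    (F := fun s x => c s x) (F' := fun s x => ct s x) (x₀ := t) (a := (0:ℝ)) (b := ℓ)
    (bound := fun _ => M) (μ := MeasureTheory.volume) (s := Metric.ball t 1) (Metric.ball_mem_nhds t one_pos)
    (Filter.Eventually.of_forall (fun s =>
      ((hc_cont s).mono (by rw [uIoc_of_le hℓ0]; exact Ioc_subset_Icc_self)).aestronglyMeasurable
        measurableSet_Ioc))
    (((hc_cont t).intervalIntegrable_of_Icc hℓ0))
    (((hct_cont t).mono (by rw [uIoc_of_le hℓ0]; exact Ioc_subset_Icc_self)).aestronglyMeasurable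
      measurableSet_Ioc)
    (Filter.Eventually.of_forall (fun x hx s hs => by
      rw [uIoc_of_le hℓ0] at hx
      exact hM (s, x) ⟨by
        rw [Real.ball_eq_Ioo] at hs
        exact ⟨by linarith [hs.1], by linarith [hs.2]⟩, Ioc_subset_Icc_self hx⟩))
    intervalIntegrable_const
    (Filter.Eventually.of_forall (fun x hx s _ => by
      rw [uIoc_of_le hℓ0] at hx
      exact hsol.hasDeriv_t x (Ioc_subset_Icc_self hx) s))
  have hderiv := key.2
  -- now compute ∫ ct t x dx
  have hcx_int : IntervalIntegrable (cx t) MeasureTheory.volume 0 ℓ :=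
    (hcx_cont t).intervalIntegrable_of_Icc hℓ0
  have hcxx_int : IntervalIntegrable (cxx t) MeasureTheory.volume 0 ℓ :=
    (hcxx_cont t).intervalIntegrable_of_Icc hℓ0
  have hr_int : IntervalIntegrable (r t) MeasureTheory.volume 0 ℓ :=
    (hr_cont t).intervalIntegrable_of_Icc hℓ0
  have ftc1 : ∫ x in (0:ℝ)..ℓ, cx t x = c t ℓ - c t 0 := by
    apply intervalIntegral.integral_eq_sub_of_hasDeriv_right_of_le hℓ0 (hc_cont t)
      (fun x hx => ?_) hcx_int
    exact ((hsol.hasDeriv_x t x (Ioo_subset_Icc_self hx)).hasDerivAt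
      (Icc_mem_nhds hx.1 hx.2)).hasDerivWithinAt
  have ftc2 : ∫ x in (0:ℝ)..ℓ, cxx t x = cx t ℓ - cx t 0 := by
    apply intervalIntegral.integral_eq_sub_of_hasDeriv_right_of_le hℓ0 (hcx_cont t)
      (fun x hx => ?_) hcxx_int
    exact ((hsol.hasDeriv_xx t x (Ioo_subset_Icc_self hx)).hasDerivAt
      (Icc_mem_nhds hx.1 hx.2)).hasDerivWithinAt
  have hval : ∫ x in (0:ℝ)..ℓ, ct t x
      = v * cin t - v * ceff t + ∫ x in (0:ℝ)..ℓ, r t x := by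
    have : ∫ x in (0:ℝ)..ℓ, ct t x
        = ∫ x in (0:ℝ)..ℓ, (D * cxx t x - v * cx t x + r t x) := by
      apply intervalIntegral.integral_congr
      intro x hx
      rw [uIcc_of_le hℓ0] at hx
      exact hsol.pde t x hx
    rw [this, intervalIntegral.integral_add ((hcxx_int.const_mul D).sub (hcx_int.const_mul v))
      hr_int, intervalIntegral.integral_sub (hcxx_int.const_mul D) (hcx_int.const_mul v),
      intervalIntegral.integral_const_mul, intervalIntegral.integral_const_mul, ftc1, ftc2,
      hin t, hout t]
    ring
  rw [← hval]
  exact hderiv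
end

section
/- Let c be a classical solution of the convection–dispersion equation on [0, ℓ] and let c_in : ℝ → ℝ. Suppose the entrance mass balance holds on every sub-column adjacent to the inlet: for every a ∈ (0, ℓ] and every t, d/dt ∫₀^a c(t,x) dx = v·c_in(t) − (v·c(t,a) − D·∂x c(t,a)) + ∫₀^a r(t,x) dx. Then the third-type entrance condition holds: v·c_in(t) = v·c(t,0) − D·∂x c(t,0) for all t. In other words, a third-type entrance is a necessary condition of the conservation law. -/
open Set

/-- A third-type entrance is a necessary condition of the conservation law:
if the mass balance with influent flux `v·c_in(t)` holds on every sub-column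
`[0, a]` adjacent to the inlet, then `v·c_in(t) = v·c(t,0) − D·∂x c(t,0)`
for all `t`. -/
theorem cde_third_type_entrance_necessary
    (D v ℓ : ℝ) (hD : 0 < D) (hv : 0 < v) (hℓ : 0 < ℓ)
    (c ct cx cxx r : ℝ → ℝ → ℝ) (cin : ℝ → ℝ)
    (hsol : IsCDESolution D v ℓ c ct cx cxx r)
    (hbal : ∀ a ∈ Ioc (0:ℝ) ℓ, ∀ t : ℝ,
      HasDerivAt (fun s : ℝ => ∫ x in (0:ℝ)..a, c s x)
        (v * cin t - (v * c t a - D * cx t a) + ∫ x in (0:ℝ)..a, r t x) t) :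
    ∀ t : ℝ, v * cin t = v * c t 0 - D * cx t 0 := by
  intro t
  have h0ℓ : (0:ℝ) ∈ Icc (0:ℝ) ℓ := ⟨le_refl 0, hℓ.le⟩
  -- bound on ct on a compact rectangle around `t`
  have hKc : IsCompact (Icc (t-1) (t+1) ×ˢ Icc (0:ℝ) ℓ) := isCompact_Icc.prod isCompact_Icc
  obtain ⟨M, hM⟩ := hKc.exists_bound_of_continuousOn
    (hsol.cont_ct.mono (fun p hp => ⟨trivial, hp.2⟩))
  set φ : ℝ → ℝ := fun a => v * cin t - (v * c t a - D * cx t a) + ∫ x in (0:ℝ)..a, r t x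
    with hφ
  -- key bound: |φ a| ≤ M * a for all a ∈ Ioc 0 ℓ
  have key : ∀ a ∈ Ioc (0:ℝ) ℓ, |φ a| ≤ M * a := by
    intro a ha
    set g : ℝ → ℝ := fun s => ∫ x in (0:ℝ)..a, c s x with hg
    have hderiv : HasDerivAt g (φ a) t := hbal a ha t
    have htmem : t ∈ Icc (t-1) (t+1) := ⟨by linarith, by linarith⟩
    have hint : ∀ u : ℝ, IntervalIntegrable (c u) MeasureTheory.volume 0 a := by
      intro u
      apply ContinuousOn.intervalIntegrable
      apply ContinuousOn.mono (s := Icc 0 ℓ)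
      · exact fun x hx => ((hsol.hasDeriv_x u) x hx).continuousWithinAt
      · rw [uIcc_of_le ha.1.le]; exact Icc_subset_Icc le_rfl ha.2
    have hlip : ∀ s ∈ Icc (t-1) (t+1), |g s - g t| ≤ M * |s - t| * a := by
      intro s hs
      rw [hg, ← intervalIntegral.integral_sub (hint s) (hint t)]
      have hbd : ∀ x ∈ uIoc (0:ℝ) a, ‖c s x - c t x‖ ≤ M * |s - t| := by
        intro x hx
        rw [uIoc_of_le ha.1.le] at hx
        have hx' : x ∈ Icc (0:ℝ) ℓ := ⟨hx.1.le, hx.2.trans ha.2⟩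
        have := Convex.norm_image_sub_le_of_norm_hasDerivWithin_le
          (f := fun u => c u x) (f' := fun u => ct u x) (C := M)
          (fun u _ => (hsol.hasDeriv_t x hx' u).hasDerivWithinAt)
          (fun u hu => hM (u, x) ⟨hu, hx'⟩)
          (convex_Icc _ _) htmem hs
        simpa [Real.norm_eq_abs] using this
      have := intervalIntegral.norm_integral_le_of_norm_le_const hbd
      calc |∫ x in (0:ℝ)..a, (c s x - c t x)| ≤ M * |s - t| * |a - 0| := this
        _ = M * |s - t| * a := by rw [sub_zero, abs_of_pos ha.1]
    -- derivative bound from the Lipschitz-type bound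
    have hslope := hasDerivAt_iff_tendsto_slope.mp hderiv
    have habs : Filter.Tendsto (fun s => |slope g t s|) (nhdsWithin t {t}ᶜ) (nhds |φ a|) :=
      hslope.abs
    refine le_of_tendsto habs ?_
    have hmem : Icc (t-1) (t+1) ∈ nhdsWithin t ({t}ᶜ : Set ℝ) :=
      nhdsWithin_le_nhds (Icc_mem_nhds (by linarith) (by linarith))
    filter_upwards [hmem, self_mem_nhdsWithin] with s hs hs'
    have hst : s ≠ t := hs'
    have hst' : (0:ℝ) < |s - t| := abs_pos.mpr (sub_ne_zero.mpr hst)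
    rw [slope_def_field, div_eq_mul_inv, abs_mul, abs_inv, ← div_eq_mul_inv]
    rw [div_le_iff₀ hst']
    calc |g s - g t| ≤ M * |s - t| * a := hlip s hs
      _ = M * a * |s - t| := by ring
  -- limit as a → 0⁺
  have hne : (nhdsWithin (0:ℝ) (Ioc 0 ℓ)).NeBot := by
    refine mem_closure_iff_nhdsWithin_neBot.mp ?_
    rw [closure_Ioc hℓ.ne]
    exact ⟨le_rfl, hℓ.le⟩
  have hsub : Ioc (0:ℝ) ℓ ⊆ Icc 0 ℓ := Ioc_subset_Icc_self
  have hle : nhdsWithin (0:ℝ) (Ioc 0 ℓ) ≤ nhdsWithin 0 (Icc 0 ℓ) :=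
    nhdsWithin_mono _ hsub
  -- bound on r t on [0, ℓ]
  obtain ⟨C, hC⟩ := (isCompact_Icc (a := (0:ℝ)) (b := ℓ)).exists_bound_of_continuousOn
    (hsol.cont_r.comp ((continuous_const.prodMk continuous_id).continuousOn)
      (fun x hx => ⟨trivial, hx⟩) : ContinuousOn (fun x => r t x) (Icc 0 ℓ))
  have hrint : Filter.Tendsto (fun a => ∫ x in (0:ℝ)..a, r t x)
      (nhdsWithin (0:ℝ) (Ioc 0 ℓ)) (nhds 0) := by
    apply squeeze_zero_norm' (a := fun b => C * b)
    · filter_upwards [self_mem_nhdsWithin] with a ha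
      have hbd : ∀ x ∈ uIoc (0:ℝ) a, ‖r t x‖ ≤ C := by
        intro x hx
        rw [uIoc_of_le ha.1.le] at hx
        exact hC x ⟨hx.1.le, hx.2.trans ha.2⟩
      have := intervalIntegral.norm_integral_le_of_norm_le_const hbd
      calc ‖∫ x in (0:ℝ)..a, r t x‖ ≤ C * |a - 0| := this
        _ = C * a := by rw [sub_zero, abs_of_pos ha.1]
    · have : Filter.Tendsto (fun a : ℝ => C * a) (nhds 0) (nhds (C * 0)) :=
        (continuous_const.mul continuous_id).tendsto 0
      rw [mul_zero] at this
      exact this.mono_left nhdsWithin_le_nhds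
  have hc0 : Filter.Tendsto (fun a => c t a) (nhdsWithin (0:ℝ) (Ioc 0 ℓ)) (nhds (c t 0)) :=
    (((hsol.hasDeriv_x t) 0 h0ℓ).continuousWithinAt).tendsto.mono_left hle
  have hcx0 : Filter.Tendsto (fun a => cx t a) (nhdsWithin (0:ℝ) (Ioc 0 ℓ)) (nhds (cx t 0)) :=
    (((hsol.hasDeriv_xx t) 0 h0ℓ).continuousWithinAt).tendsto.mono_left hle
  have lim1 : Filter.Tendsto φ (nhdsWithin (0:ℝ) (Ioc 0 ℓ))
      (nhds (v * cin t - (v * c t 0 - D * cx t 0) + 0)) := by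
    exact (tendsto_const_nhds.sub ((tendsto_const_nhds.mul hc0).sub
      (tendsto_const_nhds.mul hcx0))).add hrint
  have lim2 : Filter.Tendsto φ (nhdsWithin (0:ℝ) (Ioc 0 ℓ)) (nhds 0) := by
    apply squeeze_zero_norm' (a := fun b => M * b)
    · filter_upwards [self_mem_nhdsWithin] with a ha
      exact key a ha
    · have : Filter.Tendsto (fun a : ℝ => M * a) (nhds 0) (nhds (M * 0)) :=
        (continuous_const.mul continuous_id).tendsto 0
      rw [mul_zero] at this
      exact this.mono_left nhdsWithin_le_nhds
  have := tendsto_nhds_unique lim1 lim2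
  linarith
end

section
/- Let c be a classical solution of the convection–dispersion equation on [0, ℓ] and let c_eff : ℝ → ℝ. Suppose the exit mass balance holds on every sub-column adjacent to the outlet: for every a ∈ [0, ℓ) and every t, d/dt ∫ₐ^ℓ c(t,x) dx = (v·c(t,a) − D·∂x c(t,a)) − v·c_eff(t) + ∫ₐ^ℓ r(t,x) dx. Then the third-type exit condition holds: v·c_eff(t) = v·c(t,ℓ) − D·∂x c(t,ℓ) for all t. In other words, a third-type exit is a necessary condition of the conservation law. -/
open Set

/-- Slices of a jointly continuous function are continuous. -/
lemma cde_slice_cont {ℓ : ℝ} {f : ℝ → ℝ → ℝ}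
    (hf : ContinuousOn (Function.uncurry f) (univ ×ˢ Icc 0 ℓ)) (s : ℝ) :
    ContinuousOn (f s) (Icc (0:ℝ) ℓ) := by
  have : ContinuousOn (fun x : ℝ => Function.uncurry f (s, x)) (Icc 0 ℓ) :=
    hf.comp ((continuous_const.prodMk continuous_id).continuousOn)
      (fun x hx => ⟨mem_univ _, hx⟩)
  simpa [Function.uncurry] using this

/-- A third-type exit is a necessary condition of the conservation law:
if the mass balance with effluent flux `v·c_eff(t)` holds on every sub-column
`[a, ℓ]` adjacent to the outlet, then `v·c_eff(t) = v·c(t,ℓ) − D·∂x c(t,ℓ)`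
for all `t`. -/
theorem cde_third_type_exit_necessary
    (D v ℓ : ℝ) (hD : 0 < D) (hv : 0 < v) (hℓ : 0 < ℓ)
    (c ct cx cxx r : ℝ → ℝ → ℝ) (ceff : ℝ → ℝ)
    (hsol : IsCDESolution D v ℓ c ct cx cxx r)
    (hbal : ∀ a ∈ Ico (0:ℝ) ℓ, ∀ t : ℝ,
      HasDerivAt (fun s : ℝ => ∫ x in a..ℓ, c s x)
        ((v * c t a - D * cx t a) - v * ceff t + ∫ x in a..ℓ, r t x) t) :
    ∀ t : ℝ, v * ceff t = v * c t ℓ - D * cx t ℓ := by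
  obtain ⟨hx, hxx, ht, hct, hcx, hcxx, hr, hpde⟩ := hsol
  intro t₀
  have hIoc : uIoc (0:ℝ) ℓ = Ioc 0 ℓ := uIoc_of_le hℓ.le
  have hIcc : uIcc (0:ℝ) ℓ = Icc 0 ℓ := uIcc_of_le hℓ.le
  have hsub : Ioc (0:ℝ) ℓ ⊆ Icc 0 ℓ := Ioc_subset_Icc_self
  -- continuity of slices
  have hcont_c : ∀ s, ContinuousOn (c s) (Icc (0:ℝ) ℓ) := fun s x hx' =>
    (hx s x hx').continuousWithinAt
  have hcont_cx' : ContinuousOn (cx t₀) (Icc (0:ℝ) ℓ) := cde_slice_cont hcx t₀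
  have hcont_cxx' : ContinuousOn (cxx t₀) (Icc (0:ℝ) ℓ) := cde_slice_cont hcxx t₀
  have hcont_r' : ContinuousOn (r t₀) (Icc (0:ℝ) ℓ) := cde_slice_cont hr t₀
  have hcont_ct' : ContinuousOn (ct t₀) (Icc (0:ℝ) ℓ) := cde_slice_cont hct t₀
  -- integrability
  have hint_cx : IntervalIntegrable (cx t₀) MeasureTheory.volume 0 ℓ :=
    (hcont_cx'.mono (by rw [hIcc])).intervalIntegrable
  have hint_cxx : IntervalIntegrable (cxx t₀) MeasureTheory.volume 0 ℓ :=
    (hcont_cxx'.mono (by rw [hIcc])).intervalIntegrable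
  have hint_r : IntervalIntegrable (r t₀) MeasureTheory.volume 0 ℓ :=
    (hcont_r'.mono (by rw [hIcc])).intervalIntegrable
  -- bound for ct on a compact time window
  obtain ⟨M, hM⟩ : ∃ M, ∀ p ∈ (Icc (t₀-1) (t₀+1) ×ˢ Icc (0:ℝ) ℓ),
      ‖Function.uncurry ct p‖ ≤ M :=
    ((isCompact_Icc.prod isCompact_Icc).exists_bound_of_continuousOn
      (hct.mono (prod_mono (subset_univ _) subset_rfl)))
  -- differentiation under the integral sign at a = 0
  have key : HasDerivAt (fun s : ℝ => ∫ x in (0:ℝ)..ℓ, c s x)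
      (∫ x in (0:ℝ)..ℓ, ct t₀ x) t₀ := by
    have hmeas : ∀ᶠ s in nhds t₀,
        MeasureTheory.AEStronglyMeasurable (c s)
          (MeasureTheory.volume.restrict (uIoc (0:ℝ) ℓ)) := by
      refine Filter.Eventually.of_forall (fun s => ?_)
      rw [hIoc]
      exact ((hcont_c s).mono hsub).aestronglyMeasurable measurableSet_Ioc
    have hint_c : IntervalIntegrable (c t₀) MeasureTheory.volume 0 ℓ :=
      ((hcont_c t₀).mono (by rw [hIcc])).intervalIntegrable
    have hct_meas : MeasureTheory.AEStronglyMeasurable (ct t₀)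
        (MeasureTheory.volume.restrict (uIoc (0:ℝ) ℓ)) := by
      rw [hIoc]
      exact (hcont_ct'.mono hsub).aestronglyMeasurable measurableSet_Ioc
    have hball : Metric.ball t₀ 1 ⊆ Icc (t₀-1) (t₀+1) := by
      rw [Real.ball_eq_Ioo]; exact Ioo_subset_Icc_self
    have h_bound : ∀ᵐ x ∂(MeasureTheory.volume : MeasureTheory.Measure ℝ),
        x ∈ uIoc (0:ℝ) ℓ → ∀ s ∈ Metric.ball t₀ 1, ‖ct s x‖ ≤ M := by
      refine Filter.Eventually.of_forall (fun x hx' s hs => ?_)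
      exact hM (s, x) ⟨hball hs, hsub (hIoc ▸ hx')⟩
    have h_diff : ∀ᵐ x ∂(MeasureTheory.volume : MeasureTheory.Measure ℝ),
        x ∈ uIoc (0:ℝ) ℓ → ∀ s ∈ Metric.ball t₀ 1,
          HasDerivAt (fun s => c s x) (ct s x) s := by
      refine Filter.Eventually.of_forall (fun x hx' s _ => ?_)
      exact ht x (hsub (hIoc ▸ hx')) s
    exact (intervalIntegral.hasDerivAt_integral_of_dominated_loc_of_deriv_le
      (F := fun s x => c s x) (F' := fun s x => ct s x) (bound := fun _ => M)
      (Metric.ball_mem_nhds t₀ one_pos) hmeas hint_c hct_meas h_bound intervalIntegrable_const h_diff).2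
  -- FTC computations
  have hderiv_cx : ∀ x ∈ Ioo (0:ℝ) ℓ,
      HasDerivWithinAt (c t₀) (cx t₀ x) (Ioi x) x := fun x hx' =>
    ((hx t₀ x (Ioo_subset_Icc_self hx')).hasDerivAt
      (Icc_mem_nhds hx'.1 hx'.2)).hasDerivWithinAt
  have hderiv_cxx : ∀ x ∈ Ioo (0:ℝ) ℓ,
      HasDerivWithinAt (cx t₀) (cxx t₀ x) (Ioi x) x := fun x hx' =>
    ((hxx t₀ x (Ioo_subset_Icc_self hx')).hasDerivAt
      (Icc_mem_nhds hx'.1 hx'.2)).hasDerivWithinAt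
  have hFTC1 : ∫ x in (0:ℝ)..ℓ, cx t₀ x = c t₀ ℓ - c t₀ 0 :=
    intervalIntegral.integral_eq_sub_of_hasDeriv_right_of_le hℓ.le
      (hcont_c t₀) hderiv_cx hint_cx
  have hFTC2 : ∫ x in (0:ℝ)..ℓ, cxx t₀ x = cx t₀ ℓ - cx t₀ 0 :=
    intervalIntegral.integral_eq_sub_of_hasDeriv_right_of_le hℓ.le
      hcont_cx' hderiv_cxx hint_cxx
  have hval : ∫ x in (0:ℝ)..ℓ, ct t₀ x
      = D * (cx t₀ ℓ - cx t₀ 0) - v * (c t₀ ℓ - c t₀ 0) + ∫ x in (0:ℝ)..ℓ, r t₀ x := by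
    have h1 : ∫ x in (0:ℝ)..ℓ, ct t₀ x
        = ∫ x in (0:ℝ)..ℓ, (D * cxx t₀ x - v * cx t₀ x + r t₀ x) := by
      refine intervalIntegral.integral_congr (fun x hx' => ?_)
      exact hpde t₀ x (hIcc ▸ hx')
    rw [h1, intervalIntegral.integral_add ((hint_cxx.const_mul D).sub (hint_cx.const_mul v))
      hint_r, intervalIntegral.integral_sub (hint_cxx.const_mul D) (hint_cx.const_mul v),
      intervalIntegral.integral_const_mul, intervalIntegral.integral_const_mul,
      hFTC1, hFTC2]
  -- uniqueness of derivatives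
  have heq := key.unique (hbal 0 ⟨le_refl 0, hℓ⟩ t₀)
  rw [hval] at heq
  linarith
end

section
/- Hulburt's boundary conditions fail to satisfy overall mass conservation: let c be a classical solution of the convection–dispersion equation on [0, ℓ] satisfying a first-type entrance condition c(t,0) = c_in(t) for all t, and suppose the overall conservation law holds with influent flux v·c_in(t) and third-type effluent flux, i.e. for every t, d/dt ∫₀^ℓ c(t,x) dx = v·c_in(t) − (v·c(t,ℓ) − D·∂x c(t,ℓ)) + ∫₀^ℓ r(t,x) dx. Then the dispersive flux at the entrance must vanish identically: ∂x c(t,0) = 0 for all t. Consequently, if ∂x c(t₀,0) ≠ 0 for some time t₀, the first-type entrance violates overall mass conservation. -/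
open Set

/-- Hulburt's conditions fail overall mass conservation: if a classical
solution of the CDE has a first-type entrance `c(t,0) = c_in(t)` and the
overall conservation law holds with influent flux `v·c_in(t)` and third-type
effluent flux, then the dispersive flux at the entrance must vanish
identically, `∂x c(t,0) = 0`; consequently if `∂x c(t₀,0) ≠ 0` at some time,
the first-type entrance violates overall mass conservation. -/
theorem cde_first_type_entrance_forces_zero_entrance_gradient
    (D v ℓ : ℝ) (hD : 0 < D) (hv : 0 < v) (hℓ : 0 < ℓ)
    (c ct cx cxx r : ℝ → ℝ → ℝ) (cin : ℝ → ℝ)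
    (hsol : IsCDESolution D v ℓ c ct cx cxx r)
    (hfirst : ∀ t : ℝ, c t 0 = cin t)
    (hbal : ∀ t : ℝ,
      HasDerivAt (fun s : ℝ => ∫ x in (0:ℝ)..ℓ, c s x)
        (v * cin t - (v * c t ℓ - D * cx t ℓ) + ∫ x in (0:ℝ)..ℓ, r t x) t) :
    ∀ t : ℝ, cx t 0 = 0 := by
  intro t
  -- continuity in x at fixed time, for each of the data functions
  have slice : ∀ (f : ℝ → ℝ → ℝ), ContinuousOn (Function.uncurry f) (univ ×ˢ Icc 0 ℓ) →
      ∀ s : ℝ, ContinuousOn (f s) (Icc (0:ℝ) ℓ) := by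
    intro f hf s
    have : ContinuousOn (fun x : ℝ => Function.uncurry f (s, x)) (Icc (0:ℝ) ℓ) :=
      hf.comp (Continuous.continuousOn (by fun_prop)) (fun x hx => ⟨mem_univ s, hx⟩)
    exact this
  have hc_cont : ∀ s : ℝ, ContinuousOn (c s) (Icc (0:ℝ) ℓ) := fun s x hx =>
    (hsol.hasDeriv_x s x hx).continuousWithinAt
  have hcx_cont : ∀ s : ℝ, ContinuousOn (cx s) (Icc (0:ℝ) ℓ) := fun s x hx =>
    (hsol.hasDeriv_xx s x hx).continuousWithinAt
  have hct_int : ∀ s : ℝ, IntervalIntegrable (ct s) MeasureTheory.volume 0 ℓ :=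
    fun s => (slice ct hsol.cont_ct s).intervalIntegrable_of_Icc hℓ.le
  have hcxx_int : IntervalIntegrable (cxx t) MeasureTheory.volume 0 ℓ :=
    (slice cxx hsol.cont_cxx t).intervalIntegrable_of_Icc hℓ.le
  have hcx_int : IntervalIntegrable (cx t) MeasureTheory.volume 0 ℓ :=
    (hcx_cont t).intervalIntegrable_of_Icc hℓ.le
  have hr_int : IntervalIntegrable (r t) MeasureTheory.volume 0 ℓ :=
    (slice r hsol.cont_r t).intervalIntegrable_of_Icc hℓ.le
  -- a uniform bound for ct on [t-1,t+1] × [0,ℓ]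
  obtain ⟨M, hM⟩ : ∃ M, ∀ p ∈ (Icc (t-1) (t+1)) ×ˢ Icc (0:ℝ) ℓ, ‖Function.uncurry ct p‖ ≤ M := by
    refine ((isCompact_Icc).prod isCompact_Icc).exists_bound_of_continuousOn
      (hsol.cont_ct.mono ?_)
    intro p hp; exact ⟨mem_univ _, hp.2⟩
  -- differentiation under the integral sign
  have hderiv : HasDerivAt (fun s : ℝ => ∫ x in (0:ℝ)..ℓ, c s x)
      (∫ x in (0:ℝ)..ℓ, ct t x) t := by
    have h := intervalIntegral.hasDerivAt_integral_of_dominated_loc_of_deriv_le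
      (F := fun s x => c s x) (F' := fun s x => ct s x) (x₀ := t) (a := (0:ℝ)) (b := ℓ)
      (bound := fun _ => M) (s := Metric.ball t 1) (Metric.ball_mem_nhds t one_pos)
      (Filter.Eventually.of_forall (fun s =>
        ((hc_cont s).mono (by rw [uIoc_of_le hℓ.le]; exact
          Ioc_subset_Icc_self)).aestronglyMeasurable measurableSet_uIoc))
      ((hc_cont t).intervalIntegrable_of_Icc hℓ.le)
      (((slice ct hsol.cont_ct t).mono (by rw [uIoc_of_le hℓ.le]; exact
        Ioc_subset_Icc_self)).aestronglyMeasurable measurableSet_uIoc)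
      (Filter.Eventually.of_forall (fun x hx s hs => by
        have hx' : x ∈ Icc (0:ℝ) ℓ := by
          rw [uIoc_of_le hℓ.le] at hx; exact Ioc_subset_Icc_self hx
        have hs' : s ∈ Icc (t-1) (t+1) := by
          have := Metric.mem_ball.mp hs
          rw [Real.dist_eq] at this
          constructor <;> [linarith [abs_lt.mp this]; linarith [(abs_lt.mp this).2]]
        exact hM (s, x) ⟨hs', hx'⟩))
      (intervalIntegrable_const : IntervalIntegrable (fun _ => M) MeasureTheory.volume 0 ℓ)
      (Filter.Eventually.of_forall (fun x hx s _ => by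
        have hx' : x ∈ Icc (0:ℝ) ℓ := by
          rw [uIoc_of_le hℓ.le] at hx; exact Ioc_subset_Icc_self hx
        exact hsol.hasDeriv_t x hx' s))
    exact h.2
  -- FTC for cx and cxx on [0, ℓ]
  have ftc : ∀ (f f' : ℝ → ℝ), ContinuousOn f (Icc (0:ℝ) ℓ) →
      (∀ x ∈ Icc (0:ℝ) ℓ, HasDerivWithinAt f (f' x) (Icc 0 ℓ) x) →
      IntervalIntegrable f' MeasureTheory.volume 0 ℓ →
      ∫ x in (0:ℝ)..ℓ, f' x = f ℓ - f 0 := by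
    intro f f' hf hf' hint
    refine intervalIntegral.integral_eq_sub_of_hasDeriv_right_of_le hℓ.le hf ?_ hint
    intro x hx
    exact ((hf' x (Ioo_subset_Icc_self hx)).hasDerivAt
      (Icc_mem_nhds hx.1 hx.2)).hasDerivWithinAt
  have ftc_c : ∫ x in (0:ℝ)..ℓ, cx t x = c t ℓ - c t 0 :=
    ftc (c t) (cx t) (hc_cont t) (hsol.hasDeriv_x t) hcx_int
  have ftc_cx : ∫ x in (0:ℝ)..ℓ, cxx t x = cx t ℓ - cx t 0 :=
    ftc (cx t) (cxx t) (hcx_cont t) (hsol.hasDeriv_xx t) hcxx_int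
  -- evaluate ∫ ct via the PDE
  have hint_ct : ∫ x in (0:ℝ)..ℓ, ct t x
      = D * (cx t ℓ - cx t 0) - v * (c t ℓ - c t 0) + ∫ x in (0:ℝ)..ℓ, r t x := by
    have h1 : ∫ x in (0:ℝ)..ℓ, ct t x
        = ∫ x in (0:ℝ)..ℓ, (D * cxx t x - v * cx t x + r t x) := by
      refine intervalIntegral.integral_congr (fun x hx => ?_)
      rw [uIcc_of_le hℓ.le] at hx
      exact hsol.pde t x hx
    rw [h1, intervalIntegral.integral_add ((hcxx_int.const_mul D).sub
      (hcx_int.const_mul v)) hr_int,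
      intervalIntegral.integral_sub (hcxx_int.const_mul D) (hcx_int.const_mul v),
      intervalIntegral.integral_const_mul, intervalIntegral.integral_const_mul,
      ftc_c, ftc_cx]
  -- uniqueness of the derivative and conclusion
  have huniq := (hbal t).unique hderiv
  rw [hint_ct, hfirst t] at huniq
  have : D * cx t 0 = 0 := by ring_nf at huniq ⊢; linarith
  exact (mul_eq_zero.mp this).resolve_left (ne_of_gt hD)
end

section
/- Main theorem (third-type boundaries are necessary and sufficient): let c be a classical solution of the convection–dispersion equation on [0, ℓ] and let c_in, c_eff : ℝ → ℝ. Then the following are equivalent: (a) the mass balance holds on every sub-column, i.e. for all 0 ≤ a ≤ b ≤ ℓ and every t, d/dt ∫ₐᵇ c(t,x) dx = F(t,a) − F(t,b) + ∫ₐᵇ r(t,x) dx, where F(t,x) = v·c(t,x) − D·∂x c(t,x) for 0 < x < ℓ, F(t,0) = v·c_in(t), and F(t,ℓ) = v·c_eff(t); (b) the third-type entrance condition v·c_in(t) = v·c(t,0) − D·∂x c(t,0) and the third-type exit condition v·c_eff(t) = v·c(t,ℓ) − D·∂x c(t,ℓ) hold for all t. -/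
open Set

/-- The flux function entering the sub-column mass balances: the total
(convective plus dispersive) flux `v·c − D·∂x c` in the interior, the
influent flux `v·c_in` at `x = 0` and the effluent flux `v·c_eff` at
`x = ℓ`. -/
noncomputable def bdryFlux (D v ℓ : ℝ) (c cx : ℝ → ℝ → ℝ) (cin ceff : ℝ → ℝ)
    (t x : ℝ) : ℝ :=
  if x = 0 then v * cin t
  else if x = ℓ then v * ceff t
  else v * c t x - D * cx t x

/-- Slice continuity of a jointly continuous function. -/
lemma slice_cont {ℓ : ℝ} {f : ℝ → ℝ → ℝ}
    (hf : ContinuousOn (Function.uncurry f) (univ ×ˢ Icc 0 ℓ)) (t : ℝ) :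
    ContinuousOn (f t) (Icc 0 ℓ) := by
  have : ContinuousOn (fun x : ℝ => Function.uncurry f (t, x)) (Icc 0 ℓ) :=
    hf.comp (Continuous.continuousOn (by continuity)) (fun x hx => ⟨mem_univ _, hx⟩)
  simpa [Function.uncurry] using this

/-- Key mass-balance lemma with the interior flux `v·c − D·∂x c` evaluated
pointwise at both endpoints. -/
lemma cde_key (D v ℓ : ℝ) (c ct cx cxx r : ℝ → ℝ → ℝ)
    (hsol : IsCDESolution D v ℓ c ct cx cxx r)
    (a b : ℝ) (ha : 0 ≤ a) (hab : a ≤ b) (hb : b ≤ ℓ) (t : ℝ) :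
    HasDerivAt (fun s : ℝ => ∫ x in a..b, c s x)
      ((v * c t a - D * cx t a) - (v * c t b - D * cx t b) + ∫ x in a..b, r t x) t := by
  have hsub : Icc a b ⊆ Icc (0:ℝ) ℓ := Icc_subset_Icc ha hb
  have huIcc : uIcc a b = Icc a b := uIcc_of_le hab
  have huIoc : Set.uIoc a b ⊆ Icc (0:ℝ) ℓ := fun x hx => hsub (Ioc_subset_Icc_self (by rwa [uIoc_of_le hab] at hx))
  -- continuity of slices
  have hc_cont : ∀ s : ℝ, ContinuousOn (c s) (Icc 0 ℓ) := fun s =>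
    fun x hx => (hsol.hasDeriv_x s x hx).continuousWithinAt
  have hcx_cont : ContinuousOn (cx t) (Icc 0 ℓ) := slice_cont hsol.cont_cx t
  have hcxx_cont : ContinuousOn (cxx t) (Icc 0 ℓ) := slice_cont hsol.cont_cxx t
  have hct_cont : ContinuousOn (ct t) (Icc 0 ℓ) := slice_cont hsol.cont_ct t
  have hr_cont : ContinuousOn (r t) (Icc 0 ℓ) := slice_cont hsol.cont_r t
  -- interval integrability on [a,b]
  have hint : ∀ {f : ℝ → ℝ}, ContinuousOn f (Icc 0 ℓ) → IntervalIntegrable f MeasureTheory.volume a b := by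
    intro f hf
    have hf' : ContinuousOn f (uIcc a b) := by rw [huIcc]; exact hf.mono hsub
    exact hf'.intervalIntegrable
  -- Step A: differentiation under the integral sign
  have hbound : ∃ M : ℝ, ∀ p ∈ (Icc (t-1) (t+1)) ×ˢ (Icc (0:ℝ) ℓ), ‖Function.uncurry ct p‖ ≤ M := by
    have hK : IsCompact ((Icc (t-1) (t+1)) ×ˢ (Icc (0:ℝ) ℓ)) := (isCompact_Icc).prod isCompact_Icc
    exact hK.exists_bound_of_continuousOn (hsol.cont_ct.mono (fun p hp => ⟨mem_univ _, hp.2⟩))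
  obtain ⟨M, hM⟩ := hbound
  have hA : HasDerivAt (fun s : ℝ => ∫ x in a..b, c s x) (∫ x in a..b, ct t x) t := by
    have := intervalIntegral.hasDerivAt_integral_of_dominated_loc_of_deriv_le
      (F := fun s x => c s x) (F' := fun s x => ct s x) (x₀ := t) (a := a) (b := b)
      (bound := fun _ => M) (μ := MeasureTheory.volume) (s := Metric.ball t 1) (Metric.ball_mem_nhds t one_pos)
      (Filter.Eventually.of_forall (fun s =>
        ((hc_cont s).mono huIoc).aestronglyMeasurable measurableSet_uIoc))
      (hint (hc_cont t))
      ((hct_cont.mono huIoc).aestronglyMeasurable measurableSet_uIoc)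
      (Filter.Eventually.of_forall (fun x hx s hs => by
        have : (s, x) ∈ (Icc (t-1) (t+1)) ×ˢ (Icc (0:ℝ) ℓ) := by
          constructor
          · have := mem_ball_iff_norm.mp hs
            simp only [Real.norm_eq_abs] at this
            constructor <;> [linarith [neg_abs_le (s - t)]; linarith [le_abs_self (s - t)]]
          · exact huIoc hx
        simpa [Function.uncurry] using hM _ this))
      intervalIntegrable_const
      (Filter.Eventually.of_forall (fun x hx s _ =>
        hsol.hasDeriv_t x (huIoc hx) s))
    exact this.2
  -- Step B: compute the integral of ct
  have hpde : ∫ x in a..b, ct t x = ∫ x in a..b, (D * cxx t x - v * cx t x + r t x) := by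
    apply intervalIntegral.integral_congr
    intro x hx
    exact hsol.pde t x (hsub (by rwa [huIcc] at hx))
  -- FTC for c and cx
  have hftc : ∀ (f f' : ℝ → ℝ), ContinuousOn f (Icc 0 ℓ) →
      (∀ x ∈ Icc (0:ℝ) ℓ, HasDerivWithinAt f (f' x) (Icc 0 ℓ) x) →
      ContinuousOn f' (Icc 0 ℓ) →
      ∫ x in a..b, f' x = f b - f a := by
    intro f f' hf hf' hf'c
    apply intervalIntegral.integral_eq_sub_of_hasDeriv_right_of_le hab (hf.mono hsub)
    · intro x hx
      have hx' : x ∈ Icc (0:ℝ) ℓ := hsub (Ioo_subset_Icc_self hx)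
      have hmem : Icc (0:ℝ) ℓ ∈ nhds x := by
        apply Icc_mem_nhds
        · exact lt_of_le_of_lt ha hx.1
        · exact lt_of_lt_of_le hx.2 hb
      exact ((hf' x hx').hasDerivAt hmem).hasDerivWithinAt
    · exact hint hf'c
  have hcxint : ∫ x in a..b, cx t x = c t b - c t a :=
    hftc (c t) (cx t) (hc_cont t) (hsol.hasDeriv_x t) hcx_cont
  have hcxxint : ∫ x in a..b, cxx t x = cx t b - cx t a :=
    hftc (cx t) (cxx t) hcx_cont (hsol.hasDeriv_xx t) hcxx_cont
  have hsplit : ∫ x in a..b, (D * cxx t x - v * cx t x + r t x)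
      = D * (∫ x in a..b, cxx t x) - v * (∫ x in a..b, cx t x) + ∫ x in a..b, r t x := by
    rw [intervalIntegral.integral_add (((hint hcxx_cont).const_mul D).sub
        ((hint hcx_cont).const_mul v)) (hint hr_cont),
      intervalIntegral.integral_sub ((hint hcxx_cont).const_mul D) ((hint hcx_cont).const_mul v),
      intervalIntegral.integral_const_mul, intervalIntegral.integral_const_mul]
  have : (∫ x in a..b, ct t x)
      = (v * c t a - D * cx t a) - (v * c t b - D * cx t b) + ∫ x in a..b, r t x := by
    rw [hpde, hsplit, hcxint, hcxxint]; ring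
  rw [← this]
  exact hA

/-- Main theorem: third-type boundaries are a necessary and sufficient
condition of the conservation law.  For a classical solution of the CDE on
`[0, ℓ]`, the mass balance holds on every sub-column `[a, b] ⊆ [0, ℓ]` with
the flux `F = bdryFlux` if and only if both the third-type entrance
condition `v·c_in(t) = v·c(t,0) − D·∂x c(t,0)` and the third-type exit
condition `v·c_eff(t) = v·c(t,ℓ) − D·∂x c(t,ℓ)` hold for all `t`. -/
theorem cde_third_type_boundaries_necessary_and_sufficient
    (D v ℓ : ℝ) (hD : 0 < D) (hv : 0 < v) (hℓ : 0 < ℓ)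
    (c ct cx cxx r : ℝ → ℝ → ℝ) (cin ceff : ℝ → ℝ)
    (hsol : IsCDESolution D v ℓ c ct cx cxx r) :
    (∀ a b : ℝ, 0 ≤ a → a ≤ b → b ≤ ℓ → ∀ t : ℝ,
        HasDerivAt (fun s : ℝ => ∫ x in a..b, c s x)
          (bdryFlux D v ℓ c cx cin ceff t a - bdryFlux D v ℓ c cx cin ceff t b
            + ∫ x in a..b, r t x) t)
      ↔
    (∀ t : ℝ, v * cin t = v * c t 0 - D * cx t 0
        ∧ v * ceff t = v * c t ℓ - D * cx t ℓ) := by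
  have hm0 : (ℓ/2) ≠ 0 := by positivity
  have hmℓ : (ℓ/2) ≠ ℓ := by intro h; linarith [h]
  have hm_nonneg : (0:ℝ) ≤ ℓ/2 := by positivity
  have hm_le : ℓ/2 ≤ ℓ := by linarith
  constructor
  · intro h t
    constructor
    · have h1 := h 0 (ℓ/2) le_rfl hm_nonneg hm_le t
      have h2 := cde_key D v ℓ c ct cx cxx r hsol 0 (ℓ/2) le_rfl hm_nonneg hm_le t
      have heq := h1.unique h2
      simp only [bdryFlux, if_pos rfl, if_neg hm0, if_neg hmℓ, if_true] at heq
      linarith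
    · have h1 := h (ℓ/2) ℓ hm_nonneg hm_le le_rfl t
      have h2 := cde_key D v ℓ c ct cx cxx r hsol (ℓ/2) ℓ hm_nonneg hm_le le_rfl t
      have heq := h1.unique h2
      simp only [bdryFlux, if_pos rfl, if_neg hm0, if_neg hmℓ, if_neg hℓ.ne', if_true] at heq
      linarith
  · intro h a b ha hab hb t
    have hflux : ∀ x, 0 ≤ x → x ≤ ℓ →
        bdryFlux D v ℓ c cx cin ceff t x = v * c t x - D * cx t x := by
      intro x hx0 hxℓ
      unfold bdryFlux
      split_ifs with h0 hl
      · subst h0; exact (h t).1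
      · subst hl; exact (h t).2
      · rfl
    rw [hflux a ha (hab.trans hb), hflux b (ha.trans hab) hb]
    exact cde_key D v ℓ c ct cx cxx r hsol a b ha hab hb t
end
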